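/- arXiv:hep-th/9304122 — 2 statements merged into one kernel-verified Lean document; each statement's English description precedes it below -/
import Mathlib

section
/- Let k + 2 = p/q with gcd(p,q)=1, p,q > 0, and let j satisfy 2j + 1 = r - s·(p/q) with 1 ≤ r ≤ p-1, 0 ≤ s ≤ q-1. Set q̃ = 2p - q and m = 2r - s - 1. Then h_V := j(j+1/2)/(k+3/2) - j(j+1)/(k+2) = j(j-k-1)/((2k+3)(k+2)) = ((mp - r q̃)^2 - (p - q̃)^2)/(4 p q̃). -/
/-- For `k + 2 = p/q` (coprime positive `p, q`, with `q̃ = 2p - q > 0`) and an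
admissible isospin `j` with `2j + 1 = r - s·(p/q)`, `1 ≤ r ≤ p-1`, `0 ≤ s ≤ q-1`,
setting `m = 2r - s - 1`, the coset conformal weight satisfies
`h_V = j(j+1/2)/(k+3/2) - j(j+1)/(k+2) = j(j-k-1)/((2k+3)(k+2))
     = ((mp - r q̃)² - (p - q̃)²)/(4 p q̃)`. -/
theorem statement_11 (p q r s : ℕ) (hp : 0 < p) (hq : 0 < q)
    (hco : Nat.Coprime p q) (hq2 : q < 2 * p)
    (hr1 : 1 ≤ r) (hr2 : r ≤ p - 1) (hs : s ≤ q - 1)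
    (k j : ℚ) (hk : k + 2 = (p : ℚ) / q)
    (hj : 2 * j + 1 = (r : ℚ) - (s : ℚ) * ((p : ℚ) / q)) :
    j * (j + 1/2) / (k + 3/2) - j * (j + 1) / (k + 2)
        = j * (j - k - 1) / ((2 * k + 3) * (k + 2))
    ∧ j * (j + 1/2) / (k + 3/2) - j * (j + 1) / (k + 2)
        = ((((2 * (r : ℤ) - (s : ℤ) - 1 : ℤ) : ℚ) * (p : ℚ)
              - (r : ℚ) * ((2 * (p : ℤ) - q : ℤ) : ℚ)) ^ 2
            - ((p : ℚ) - ((2 * (p : ℤ) - q : ℤ) : ℚ)) ^ 2)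
          / (4 * (p : ℚ) * ((2 * (p : ℤ) - q : ℤ) : ℚ)) := by
  have hq0 : (q : ℚ) ≠ 0 := Nat.cast_ne_zero.mpr hq.ne'
  have hp0 : (p : ℚ) ≠ 0 := Nat.cast_ne_zero.mpr hp.ne'
  have hqt : (0 : ℚ) < 2 * p - q := by
    have : (q : ℚ) < 2 * p := by exact_mod_cast hq2
    linarith
  have hqt0 : (2 * (p : ℚ) - q) ≠ 0 := ne_of_gt hqt
  have hk' : k = (p : ℚ) / q - 2 := by linarith
  have hj' : j = ((r : ℚ) - (s : ℚ) * ((p : ℚ) / q) - 1) / 2 := by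
    field_simp at hj ⊢; linarith
  have h1 : k + 3/2 ≠ 0 := by
    rw [hk']; rw [div_sub' hq0, div_add' _ _ _ hq0]
    exact div_ne_zero (by push_cast; linarith) hq0
  have h2 : k + 2 ≠ 0 := by rw [hk]; exact div_ne_zero hp0 hq0
  have h3 : 2 * k + 3 ≠ 0 := by
    intro h
    have hpq : (p : ℚ) / q = 1 / 2 := by rw [hk'] at h; linarith
    rw [div_eq_iff hq0] at hpq
    linarith
  have h4 : 4 * (p : ℚ) * (2 * (p : ℚ) - q) ≠ 0 :=
    mul_ne_zero (mul_ne_zero (by norm_num) hp0) hqt0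
  have key : j * (j + 1/2) / (k + 3/2) - j * (j + 1) / (k + 2)
      = j * (j - k - 1) / ((2 * k + 3) * (k + 2)) := by
    rw [div_sub_div _ _ h1 h2, div_eq_div_iff (mul_ne_zero h1 h2) (mul_ne_zero h3 h2)]
    ring
  refine ⟨key, key.trans ?_⟩
  push_cast
  rw [div_eq_div_iff (mul_ne_zero h3 h2) h4]
  subst hk' hj'
  field_simp
  ring
end

section
/- For the theta functions ϑ[b/a](z, aτ) = Σ_{n∈ℤ} exp(iπ a τ (n + b/a)^2 + 2πi z (n + b/a)), the product expansion ϑ[a_1/n_1](z_1, n_1 τ)·ϑ[a_2/n_2](z_2, n_2 τ) = Σ_{d ∈ ℤ/(n_1+n_2)} ϑ[(a_1+a_2+n_1 d)/(n_1+n_2)](z_1+z_2, (n_1+n_2)τ) · ϑ[(n_1 n_2 d + n_2 a_1 - n_1 a_2)/(n_1 n_2 (n_1+n_2))](n_2 z_1 - n_1 z_2, n_1 n_2 (n_1+n_2) τ) holds for positive integers n_1, n_2 and Im τ > 0. -/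
open Complex

/-- The theta function with characteristic `c`:
`ϑ[c](z, Nτ) = Σ_{n∈ℤ} exp(iπ N τ (n+c)² + 2πi z (n+c))`. -/
noncomputable def thetaChar (c N z τ : ℂ) : ℂ :=
  ∑' n : ℤ, Complex.exp ((Real.pi : ℂ) * Complex.I * N * τ * ((n : ℂ) + c) ^ 2
    + 2 * (Real.pi : ℂ) * Complex.I * z * ((n : ℂ) + c))

/-- Generic quadratic-form splitting identity used in the theta product expansion. -/
lemma quad_identity (N1 N2 A B w1 w2 τ P : ℂ) (h1 : N1 ≠ 0) (h2 : N2 ≠ 0)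
    (hs : N1 + N2 ≠ 0) :
    P * N1 * τ * A ^ 2 + 2 * P * w1 * A + (P * N2 * τ * B ^ 2 + 2 * P * w2 * B)
    = P * (N1 + N2) * τ * ((N1 * A + N2 * B) / (N1 + N2)) ^ 2
        + 2 * P * (w1 + w2) * ((N1 * A + N2 * B) / (N1 + N2))
      + (P * (N1 * N2 * (N1 + N2)) * τ * ((A - B) / (N1 + N2)) ^ 2
        + 2 * P * (N2 * w1 - N1 * w2) * ((A - B) / (N1 + N2))) := by
  field_simp
  ring

/-- The summand of the theta function with characteristic `c`. -/
noncomputable def tterm (c N z τ : ℂ) (n : ℤ) : ℂ :=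
  Complex.exp ((Real.pi : ℂ) * Complex.I * N * τ * ((n : ℂ) + c) ^ 2
    + 2 * (Real.pi : ℂ) * Complex.I * z * ((n : ℂ) + c))

lemma tterm_eq (c N z τ : ℂ) (n : ℤ) :
    tterm c N z τ n = Complex.exp ((Real.pi : ℂ) * Complex.I * N * τ * c ^ 2
      + 2 * (Real.pi : ℂ) * Complex.I * z * c) * jacobiTheta₂_term n (N * τ * c + z) (N * τ) := by
  rw [tterm, jacobiTheta₂_term, ← Complex.exp_add]
  congr 1
  ring

lemma summable_norm_tterm {N τ : ℂ} (h : 0 < (N * τ).im) (c z : ℂ) :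
    Summable fun n : ℤ => ‖tterm c N z τ n‖ := by
  simp_rw [tterm_eq, norm_mul]
  apply Summable.mul_left
  refine (summable_pow_mul_jacobiTheta₂_term_bound |(N * τ * c + z).im| h 0).of_nonneg_of_le
    (fun _ => norm_nonneg _) (fun n => ?_)
  exact (norm_jacobiTheta₂_term_le h le_rfl le_rfl n).trans_eq (by simp)

/-- Reindexing bijection underlying the theta product expansion. -/
def thetaEquiv (n1 n2 : ℕ) (h : 0 < n1 + n2) : (Fin (n1 + n2)) × ℤ × ℤ ≃ ℤ × ℤ where
  toFun x := (x.2.1 + n2 * x.2.2 + ((x.1 : ℕ) : ℤ), x.2.1 - n1 * x.2.2)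
  invFun y :=
    (⟨((y.1 - y.2) % ((n1 + n2 : ℕ) : ℤ)).toNat, by
        have h0 : (0 : ℤ) < ((n1 + n2 : ℕ) : ℤ) := by exact_mod_cast h
        have := Int.emod_nonneg (y.1 - y.2) h0.ne'
        have := Int.emod_lt_of_pos (y.1 - y.2) h0
        omega⟩,
      (y.2 + n1 * ((y.1 - y.2) / ((n1 + n2 : ℕ) : ℤ)), (y.1 - y.2) / ((n1 + n2 : ℕ) : ℤ)))
  left_inv := by
    rintro ⟨d, p, q⟩
    have h0 : (0 : ℤ) < ((n1 + n2 : ℕ) : ℤ) := by exact_mod_cast h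
    have hr : (p + n2 * q + ((d : ℕ) : ℤ)) - (p - n1 * q)
        = ((d : ℕ) : ℤ) + q * ((n1 + n2 : ℕ) : ℤ) := by push_cast; ring
    have hd0 : (0 : ℤ) ≤ ((d : ℕ) : ℤ) := by positivity
    have hdlt : ((d : ℕ) : ℤ) < ((n1 + n2 : ℕ) : ℤ) := by exact_mod_cast d.2
    have hmod : (((d : ℕ) : ℤ) + q * ((n1 + n2 : ℕ) : ℤ)) % ((n1 + n2 : ℕ) : ℤ)
        = ((d : ℕ) : ℤ) := by
      rw [Int.add_mul_emod_self_right, Int.emod_eq_of_lt hd0 hdlt]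
    have hdiv : (((d : ℕ) : ℤ) + q * ((n1 + n2 : ℕ) : ℤ)) / ((n1 + n2 : ℕ) : ℤ) = q := by
      rw [Int.add_mul_ediv_right _ _ h0.ne', Int.ediv_eq_zero_of_lt hd0 hdlt, zero_add]
    ext
    · simp only [hr, hmod, hdiv]
      omega
    · simp only [hr, hmod, hdiv]
      ring
    · simp only [hr, hmod, hdiv]
  right_inv := by
    rintro ⟨m, n⟩
    have h0 : (0 : ℤ) < ((n1 + n2 : ℕ) : ℤ) := by exact_mod_cast h
    have hmod0 : (0:ℤ) ≤ (m - n) % ((n1 + n2 : ℕ) : ℤ) := Int.emod_nonneg _ h0.ne'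
    have key := Int.mul_ediv_add_emod (m - n) ((n1 + n2 : ℕ) : ℤ)
    ext
    · simp only
      rw [Int.toNat_of_nonneg hmod0]
      have : (n1 : ℤ) * ((m - n) / ((n1 + n2 : ℕ) : ℤ))
            + (n2 : ℤ) * ((m - n) / ((n1 + n2 : ℕ) : ℤ))
          = ((n1 + n2 : ℕ) : ℤ) * ((m - n) / ((n1 + n2 : ℕ) : ℤ)) := by push_cast; ring
      linarith [key, this]
    · simp only
      ring

/-- The pointwise identity between the summands on the two sides. -/
lemma key_identity (n1 n2 : ℕ) (h1 : 0 < n1) (h2 : 0 < n2) (a1 a2 z1 z2 τ : ℂ)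
    (d : ℕ) (p q : ℤ) :
    tterm (a1 / n1) (n1 : ℂ) z1 τ (p + n2 * q + (d : ℤ))
      * tterm (a2 / n2) (n2 : ℂ) z2 τ (p - n1 * q)
    = tterm ((a1 + a2 + (n1 : ℂ) * d) / ((n1 : ℂ) + n2)) ((n1 : ℂ) + n2) (z1 + z2) τ p
      * tterm (((n1 : ℂ) * n2 * d + (n2 : ℂ) * a1 - (n1 : ℂ) * a2)
          / ((n1 : ℂ) * n2 * ((n1 : ℂ) + n2)))
        ((n1 : ℂ) * n2 * ((n1 : ℂ) + n2)) ((n2 : ℂ) * z1 - (n1 : ℂ) * z2) τ q := by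
  have hn1 : (n1 : ℂ) ≠ 0 := Nat.cast_ne_zero.mpr h1.ne'
  have hn2 : (n2 : ℂ) ≠ 0 := Nat.cast_ne_zero.mpr h2.ne'
  have hnn : (n1 : ℂ) + n2 ≠ 0 := by
    have : ((n1 + n2 : ℕ) : ℂ) ≠ 0 := Nat.cast_ne_zero.mpr (by omega)
    push_cast at this; exact this
  set A : ℂ := ((p : ℂ) + n2 * q + d) + a1 / n1 with hA
  set B : ℂ := ((p : ℂ) - n1 * q) + a2 / n2 with hB
  have e1 : (((p + n2 * q + (d : ℤ) : ℤ)) : ℂ) + a1 / n1 = A := by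
    rw [hA]; push_cast; ring
  have e2 : (((p - n1 * q : ℤ)) : ℂ) + a2 / n2 = B := by
    rw [hB]; push_cast; ring
  have e3 : (p : ℂ) + (a1 + a2 + (n1 : ℂ) * d) / ((n1 : ℂ) + n2)
      = ((n1 : ℂ) * A + n2 * B) / ((n1 : ℂ) + n2) := by
    rw [hA, hB]; field_simp; ring
  have e4 : (q : ℂ) + ((n1 : ℂ) * n2 * d + (n2 : ℂ) * a1 - (n1 : ℂ) * a2)
        / ((n1 : ℂ) * n2 * ((n1 : ℂ) + n2))
      = (A - B) / ((n1 : ℂ) + n2) := by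
    rw [hA, hB]; field_simp; ring
  simp only [tterm, ← Complex.exp_add, e1, e2, e3, e4]
  congr 1
  linear_combination quad_identity (n1 : ℂ) n2 A B z1 z2 τ ((Real.pi : ℂ) * I) hn1 hn2 hnn

lemma im_natCast_mul (k : ℕ) (τ : ℂ) : ((k : ℂ) * τ).im = k * τ.im := by
  simp [Complex.mul_im]

lemma thetaChar_eq (c N z τ : ℂ) : thetaChar c N z τ = ∑' n, tterm c N z τ n := rfl

/-- Theta function product expansion: for positive integers `n₁, n₂` and `Im τ > 0`,
`ϑ[a₁/n₁](z₁, n₁τ) · ϑ[a₂/n₂](z₂, n₂τ)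
  = Σ_{d ∈ ℤ/(n₁+n₂)} ϑ[(a₁+a₂+n₁d)/(n₁+n₂)](z₁+z₂, (n₁+n₂)τ)
      · ϑ[(n₁n₂d + n₂a₁ - n₁a₂)/(n₁n₂(n₁+n₂))](n₂z₁ - n₁z₂, n₁n₂(n₁+n₂)τ)`. -/
theorem statement_13 (n1 n2 : ℕ) (h1 : 0 < n1) (h2 : 0 < n2)
    (a1 a2 z1 z2 τ : ℂ) (hτ : 0 < τ.im) :
    thetaChar (a1 / n1) (n1 : ℂ) z1 τ * thetaChar (a2 / n2) (n2 : ℂ) z2 τ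
      = ∑ d ∈ Finset.range (n1 + n2),
          thetaChar ((a1 + a2 + (n1 : ℂ) * d) / ((n1 : ℂ) + n2))
              ((n1 : ℂ) + n2) (z1 + z2) τ
            * thetaChar (((n1 : ℂ) * n2 * d + (n2 : ℂ) * a1 - (n1 : ℂ) * a2)
                / ((n1 : ℂ) * n2 * ((n1 : ℂ) + n2)))
              ((n1 : ℂ) * n2 * ((n1 : ℂ) + n2)) ((n2 : ℂ) * z1 - (n1 : ℂ) * z2) τ := by
  have hs : 0 < n1 + n2 := by omega
  have hi1 : 0 < ((n1 : ℂ) * τ).im := by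
    rw [im_natCast_mul]; exact mul_pos (by exact_mod_cast h1) hτ
  have hi2 : 0 < ((n2 : ℂ) * τ).im := by
    rw [im_natCast_mul]; exact mul_pos (by exact_mod_cast h2) hτ
  have hi3 : 0 < (((n1 : ℂ) + n2) * τ).im := by
    have : ((n1 : ℂ) + n2) = ((n1 + n2 : ℕ) : ℂ) := by push_cast; ring
    rw [this, im_natCast_mul]
    exact mul_pos (by exact_mod_cast hs) hτ
  have hi4 : 0 < (((n1 : ℂ) * n2 * ((n1 : ℂ) + n2)) * τ).im := by
    have : (n1 : ℂ) * n2 * ((n1 : ℂ) + n2) = ((n1 * n2 * (n1 + n2) : ℕ) : ℂ) := by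
      push_cast; ring
    rw [this, im_natCast_mul]
    exact mul_pos (by exact_mod_cast Nat.mul_pos (Nat.mul_pos h1 h2) hs) hτ
  -- LHS as a double sum
  rw [thetaChar_eq, thetaChar_eq,
    tsum_mul_tsum_of_summable_norm (summable_norm_tterm hi1 _ _) (summable_norm_tterm hi2 _ _)]
  -- RHS: each product as a double sum
  have hrhs : ∀ d : ℕ,
      thetaChar ((a1 + a2 + (n1 : ℂ) * d) / ((n1 : ℂ) + n2)) ((n1 : ℂ) + n2) (z1 + z2) τ
        * thetaChar (((n1 : ℂ) * n2 * d + (n2 : ℂ) * a1 - (n1 : ℂ) * a2)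
            / ((n1 : ℂ) * n2 * ((n1 : ℂ) + n2)))
          ((n1 : ℂ) * n2 * ((n1 : ℂ) + n2)) ((n2 : ℂ) * z1 - (n1 : ℂ) * z2) τ
      = ∑' x : ℤ × ℤ,
          tterm ((a1 + a2 + (n1 : ℂ) * d) / ((n1 : ℂ) + n2)) ((n1 : ℂ) + n2) (z1 + z2) τ x.1
          * tterm (((n1 : ℂ) * n2 * d + (n2 : ℂ) * a1 - (n1 : ℂ) * a2)
              / ((n1 : ℂ) * n2 * ((n1 : ℂ) + n2)))
            ((n1 : ℂ) * n2 * ((n1 : ℂ) + n2)) ((n2 : ℂ) * z1 - (n1 : ℂ) * z2) τ x.2 := by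
    intro d
    rw [thetaChar_eq, thetaChar_eq,
      tsum_mul_tsum_of_summable_norm (summable_norm_tterm hi3 _ _) (summable_norm_tterm hi4 _ _)]
  simp_rw [hrhs]
  -- reindex the LHS double sum
  set F : ℤ × ℤ → ℂ := fun x =>
    tterm (a1 / n1) (n1 : ℂ) z1 τ x.1 * tterm (a2 / n2) (n2 : ℂ) z2 τ x.2 with hF
  have hFs : Summable F :=
    summable_mul_of_summable_norm (summable_norm_tterm hi1 _ _) (summable_norm_tterm hi2 _ _)
  set e := thetaEquiv n1 n2 hs with he
  have hFe : Summable (F ∘ e) := e.summable_iff.mpr hFs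
  rw [← Equiv.tsum_eq e F, show (fun y => F (e y)) = F ∘ e from rfl,
    Summable.tsum_prod' hFe hFe.prod_factor, tsum_fintype]
  rw [← Fin.sum_univ_eq_sum_range (fun d : ℕ => ∑' x : ℤ × ℤ,
      tterm ((a1 + a2 + (n1 : ℂ) * d) / ((n1 : ℂ) + n2)) ((n1 : ℂ) + n2) (z1 + z2) τ x.1
      * tterm (((n1 : ℂ) * n2 * d + (n2 : ℂ) * a1 - (n1 : ℂ) * a2)
          / ((n1 : ℂ) * n2 * ((n1 : ℂ) + n2)))
        ((n1 : ℂ) * n2 * ((n1 : ℂ) + n2)) ((n2 : ℂ) * z1 - (n1 : ℂ) * z2) τ x.2) (n1 + n2)]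
  refine Finset.sum_congr rfl fun b _ => tsum_congr fun x => ?_
  exact key_identity n1 n2 h1 h2 a1 a2 z1 z2 τ (b : ℕ) x.1 x.2
end
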